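/- Let X be a real Banach space possessing a C^∞ K-map H all of whose iterated Fréchet derivatives are bounded on X (i.e. for every n, sup_{x ∈ X} ‖D^n H(x)‖ < ∞). Let Y be a Banach space and let f be a C^∞ map defined on an open ball around 0 in X with values in Y such that f and all its iterated derivatives are bounded on that ball. Then there exists a C^∞ map F : X → Y, coinciding with f on a neighborhood of 0, such that F and all its iterated Fréchet derivatives are bounded on all of X. -/

import Mathlib

open Filter Metric

/-- If a real Banach space `X` possesses a `C^∞` K-map `H` all of whose iterated Fréchet
derivatives are bounded on `X`, and `f` is a `C^∞` map on an open ball around `0` with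
values in a Banach space `Y` which is bounded together with all its iterated derivatives
on that ball, then there is a global `C^∞` map `F : X → Y` agreeing with `f` near `0`
which is bounded on `X` together with all its iterated Fréchet derivatives. -/
theorem extension_of_local_smooth_map_bounded
    {X : Type*} [NormedAddCommGroup X] [NormedSpace ℝ X] [CompleteSpace X]
    (H : X → X) (hH : ContDiff ℝ (⊤ : ℕ∞) H)
    (hHid : ∀ᶠ x in nhds (0 : X), H x = x)
    (hHbdd : ∃ C : ℝ, ∀ x, ‖H x‖ ≤ C)
    (hHder : ∀ n : ℕ, ∃ C : ℝ, ∀ x, ‖iteratedFDeriv ℝ n H x‖ ≤ C)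
    {Y : Type*} [NormedAddCommGroup Y] [NormedSpace ℝ Y] [CompleteSpace Y]
    (f : X → Y) (R : ℝ) (hR : 0 < R)
    (hf : ContDiffOn ℝ (⊤ : ℕ∞) f (ball (0 : X) R))
    (hfbdd : ∀ n : ℕ, ∃ C : ℝ, ∀ x ∈ ball (0 : X) R,
      ‖iteratedFDerivWithin ℝ n f (ball (0 : X) R) x‖ ≤ C) :
    ∃ F : X → Y, ContDiff ℝ (⊤ : ℕ∞) F ∧ (∀ᶠ x in nhds (0 : X), F x = f x) ∧
      ∀ n : ℕ, ∃ C : ℝ, ∀ x, ‖iteratedFDeriv ℝ n F x‖ ≤ C := by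
  obtain ⟨C₀, hC₀⟩ := hHbdd
  have hC₀0 : 0 ≤ C₀ := le_trans (norm_nonneg _) (hC₀ 0)
  set ε : ℝ := R / (2 * (C₀ + 1)) with hεdef
  have hεpos : 0 < ε := div_pos hR (by linarith)
  set L : X →L[ℝ] X := ε⁻¹ • ContinuousLinearMap.id ℝ X with hLdef
  have hLnorm : ‖L‖ ≤ ε⁻¹ := by
    rw [hLdef]
    refine le_trans (ContinuousLinearMap.opNorm_smul_le ε⁻¹ _) ?_
    rw [Real.norm_eq_abs, abs_of_pos (inv_pos.2 hεpos)]
    calc ε⁻¹ * ‖ContinuousLinearMap.id ℝ X‖ ≤ ε⁻¹ * 1 :=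
          mul_le_mul_of_nonneg_left ContinuousLinearMap.norm_id_le (inv_pos.2 hεpos).le
    _ = ε⁻¹ := mul_one _
  set G : X → X := fun x => ε • H (L x) with hGdef
  have hGc : ContDiff ℝ (⊤ : ℕ∞) G := ((contDiff_const (c := (ε : ℝ))).smul (hH.comp L.contDiff) :)
  have hGball : ∀ x, G x ∈ ball (0 : X) R := by
    intro x
    simp only [mem_ball, dist_zero_right]
    calc ‖G x‖ = ε * ‖H (L x)‖ := by
          rw [hGdef]; simp [norm_smul, abs_of_pos hεpos]
    _ ≤ ε * C₀ := by
          exact mul_le_mul_of_nonneg_left (hC₀ _) hεpos.le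
    _ < R := by
          rw [hεdef, div_mul_eq_mul_div, div_lt_iff₀ (by linarith)]
          nlinarith
  -- G agrees with the identity near 0
  have hGid : ∀ᶠ x in nhds (0 : X), G x = x := by
    have hL0 : L 0 = 0 := by simp
    have hten : Filter.Tendsto L (nhds 0) (nhds 0) := by
      have := L.continuous.tendsto 0
      rwa [hL0] at this
    filter_upwards [hten.eventually hHid] with x hx
    rw [hGdef]
    simp only
    rw [hx, hLdef]
    simp [smul_smul, mul_inv_cancel₀ hεpos.ne']
  refine ⟨f ∘ G, hf.comp_contDiff hGc hGball, ?_, ?_⟩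
  · filter_upwards [hGid] with x hx
    simp [Function.comp, hx]
  -- bounds on the iterated derivatives of G
  have hGder : ∀ i : ℕ, ∃ Ci : ℝ, 0 ≤ Ci ∧ ∀ x, ‖iteratedFDeriv ℝ i G x‖ ≤ Ci := by
    intro i
    obtain ⟨Ch, hCh⟩ := hHder i
    refine ⟨ε * max Ch 0 * ε⁻¹ ^ i, by positivity, fun x => ?_⟩
    have h1 : iteratedFDeriv ℝ i G x = ε • iteratedFDeriv ℝ i (H ∘ L) x :=
      iteratedFDeriv_const_smul_apply' (hf := (hH.comp L.contDiff).contDiffAt.of_le (by exact_mod_cast (le_top : (i : ℕ∞) ≤ ⊤)))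
    have h2 : iteratedFDeriv ℝ i (H ∘ L) x =
        (iteratedFDeriv ℝ i H (L x)).compContinuousLinearMap fun _ => L :=
      L.iteratedFDeriv_comp_right hH x (by exact_mod_cast le_top)
    rw [h1]
    have h3 : ‖(iteratedFDeriv ℝ i H (L x)).compContinuousLinearMap fun _ => L‖ ≤
        ‖iteratedFDeriv ℝ i H (L x)‖ * ∏ _j : Fin i, ‖L‖ :=
      ContinuousMultilinearMap.norm_compContinuousLinearMap_le _ _
    have h4 : (∏ _j : Fin i, ‖L‖) ≤ ε⁻¹ ^ i := by
      rw [Finset.prod_const, Finset.card_univ, Fintype.card_fin]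
      exact pow_le_pow_left₀ (norm_nonneg _) hLnorm i
    have h5 : ‖iteratedFDeriv ℝ i H (L x)‖ * ∏ _j : Fin i, ‖L‖ ≤ max Ch 0 * ε⁻¹ ^ i := by
      apply mul_le_mul (le_trans (hCh _) (le_max_left _ _)) h4
        (Finset.prod_nonneg fun _ _ => norm_nonneg _) (le_max_right _ _)
    calc ‖ε • iteratedFDeriv ℝ i (H ∘ ⇑L) x‖
        ≤ ‖ε‖ * ‖iteratedFDeriv ℝ i (H ∘ ⇑L) x‖ :=
          ContinuousMultilinearMap.opNorm_smul_le _ _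
    _ = ε * ‖(iteratedFDeriv ℝ i H (L x)).compContinuousLinearMap fun _ => L‖ := by
          rw [h2, Real.norm_eq_abs, abs_of_pos hεpos]
    _ ≤ ε * (max Ch 0 * ε⁻¹ ^ i) :=
          mul_le_mul_of_nonneg_left (le_trans h3 h5) hεpos.le
    _ = ε * max Ch 0 * ε⁻¹ ^ i := by ring
  -- now the derivative bounds for f ∘ G
  intro n
  -- bound for f's derivatives up to order n
  set Cf : ℕ → ℝ := fun i => Classical.choose (hfbdd i) with hCfdef
  have hCf : ∀ i, ∀ x ∈ ball (0 : X) R,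
      ‖iteratedFDerivWithin ℝ i f (ball (0 : X) R) x‖ ≤ Cf i := fun i =>
    Classical.choose_spec (hfbdd i)
  set Cg : ℕ → ℝ := fun i => Classical.choose (hGder i) with hCgdef
  have hCg0 : ∀ i, 0 ≤ Cg i := fun i => (Classical.choose_spec (hGder i)).1
  have hCg : ∀ i, ∀ x, ‖iteratedFDeriv ℝ i G x‖ ≤ Cg i := fun i =>
    (Classical.choose_spec (hGder i)).2
  set CC : ℝ := ∑ i ∈ Finset.range (n + 1), max (Cf i) 0 with hCCdef
  have hCCle : ∀ i, i ≤ n → Cf i ≤ CC := by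
    intro i hi
    calc Cf i ≤ max (Cf i) 0 := le_max_left _ _
    _ ≤ CC := Finset.single_le_sum (f := fun i => max (Cf i) 0)
        (fun j _ => le_max_right _ _) (Finset.mem_range.2 (Nat.lt_succ_of_le hi))
  set DD : ℝ := max 1 (∑ i ∈ Finset.range (n + 1), Cg i) with hDDdef
  have hDD1 : 1 ≤ DD := le_max_left _ _
  have hDDle : ∀ i, i ≤ n → Cg i ≤ DD := by
    intro i hi
    calc Cg i ≤ ∑ i ∈ Finset.range (n + 1), Cg i :=
      Finset.single_le_sum (fun j _ => hCg0 j) (Finset.mem_range.2 (Nat.lt_succ_of_le hi))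
    _ ≤ DD := le_max_right _ _
  refine ⟨(n.factorial : ℝ) * CC * DD ^ n, fun x => ?_⟩
  have key : ‖iteratedFDerivWithin ℝ n (f ∘ G) Set.univ x‖ ≤ (n.factorial : ℝ) * CC * DD ^ n := by
    apply norm_iteratedFDerivWithin_comp_le (t := ball (0 : X) R) hf hGc.contDiffOn
      (by exact_mod_cast le_top) (isOpen_ball.uniqueDiffOn) uniqueDiffOn_univ
      (fun y _ => hGball y) (Set.mem_univ x)
    · intro i hi
      exact le_trans (hCf i (G x) (hGball x)) (hCCle i hi)
    · intro i hi1 hi2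
      rw [iteratedFDerivWithin_univ]
      calc ‖iteratedFDeriv ℝ i G x‖ ≤ Cg i := hCg i x
      _ ≤ DD := hDDle i hi2
      _ ≤ DD ^ i := le_self_pow₀ hDD1 (by omega)
  rwa [iteratedFDerivWithin_univ] at key
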